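/- Let W be a vector space of complex-valued functions, each analytic in a neighbourhood of 0, and suppose m := maxord₀(W) = sup_{0≠f∈W} ord₀(f) is finite. Then for every ε > 0 there exist r > 0 and a nonzero f ∈ W, analytic on a neighbourhood of [0,2r], such that max_{0≤x≤2r} |f(x)| ≥ (2^m − ε) · max_{0≤x≤r} |f(x)|; i.e., sup_{r>0} sup_{0≠f∈W} ( max_{0≤x≤2r}|f(x)| / max_{0≤x≤r}|f(x)| ) ≥ 2^{maxord₀(W)}. -/

import Mathlib

/-- The order of vanishing at `0` of a function `f` (analytic near `0`): the least `m`
with `iteratedDeriv m f 0 ≠ 0`. By the convention `sInf ∅ = 0` this gives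
`ord₀(0) = 0`. -/
private lemma iteratedDeriv_eq_factorial_smul {f : ℂ → ℂ} {p : FormalMultilinearSeries ℂ ℂ ℂ}
    (hp : HasFPowerSeriesAt f p 0) (k : ℕ) :
    iteratedDeriv k f 0 = k.factorial • p.coeff k := by
  obtain ⟨r, hr⟩ := hp
  rw [iteratedDeriv_eq_iteratedFDeriv, ← hr.factorial_smul 1 k]
  rfl

lemma deriv_set_eq {f : ℂ → ℂ} {p : FormalMultilinearSeries ℂ ℂ ℂ}
    (hp : HasFPowerSeriesAt f p 0) :
    {n : ℕ | iteratedDeriv n f 0 ≠ 0} = {n : ℕ | p n ≠ 0} := by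
  ext k
  simp only [Set.mem_setOf_eq, iteratedDeriv_eq_factorial_smul hp k, ne_eq, smul_eq_zero,
    Nat.cast_eq_zero, Nat.factorial_ne_zero, false_or, not_iff_not,
    ← FormalMultilinearSeries.coeff_eq_zero]

noncomputable def ord0 (f : ℂ → ℂ) : ℕ :=
  sInf {m : ℕ | iteratedDeriv m f 0 ≠ 0}

/-- (Proposition 2.7.) If `W` is a vector space of functions analytic
near `0` with finite maximal order of vanishing `m = maxord₀(W)`, then
`sup_{r>0} sup_{0≠f∈W} (max_{[0,2r]} |f| / max_{[0,r]} |f|) ≥ 2^m`: for every `ε > 0`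
there are `r > 0` and a nonzero `f ∈ W`, analytic on a neighbourhood of `[0, 2r]`, with
`max_{0≤x≤2r} |f(x)| ≥ (2^m - ε) · max_{0≤x≤r} |f(x)|`. -/
theorem doubling_ratio_ge_maxord (W : Submodule ℂ (ℂ → ℂ))
    (hW : ∀ f ∈ W, AnalyticAt ℂ f 0) (m : ℕ)
    (hm : IsGreatest {k : ℕ | ∃ f ∈ W, f ≠ (0 : ℂ → ℂ) ∧ ord0 f = k} m) :
    ∀ ε > (0 : ℝ), ∃ r > (0 : ℝ), ∃ f ∈ W, f ≠ (0 : ℂ → ℂ) ∧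
      (∀ x ∈ Set.Icc (0 : ℝ) (2 * r), AnalyticAt ℂ f (x : ℂ)) ∧
      ((2 : ℝ) ^ m - ε) * sSup ((fun x : ℝ => ‖f (x : ℂ)‖) '' Set.Icc 0 r) ≤
        sSup ((fun x : ℝ => ‖f (x : ℂ)‖) '' Set.Icc 0 (2 * r)) := by
  have hm' : IsGreatest {k : ℕ | ∃ f ∈ W, f ≠ (0 : ℂ → ℂ) ∧
      sInf {m : ℕ | iteratedDeriv m f 0 ≠ 0} = k} m := hm
  intro ε hε
  obtain ⟨⟨f, hfW, hfne, hford⟩, hub⟩ := hm'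
  have hf0 : AnalyticAt ℂ f 0 := hW f hfW
  obtain ⟨p, hp⟩ := hf0
  rcases eq_or_ne m 0 with hm'0 | hm'1
  · -- easy case m = 0
    obtain ⟨ρ, hρ, hball⟩ := Metric.eventually_nhds_iff.mp (AnalyticAt.eventually_analyticAt ⟨p, hp⟩)
    set r := ρ / 4 with hrdef
    have hr : 0 < r := by positivity
    have hdist : ∀ x : ℝ, x ∈ Set.Icc (0:ℝ) (2*r) → dist (x:ℂ) 0 < ρ := by
      intro x hx
      rw [dist_zero_right, Complex.norm_real, Real.norm_eq_abs, abs_of_nonneg hx.1]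
      have := hx.2; rw [hrdef] at this; linarith
    have han : ∀ x ∈ Set.Icc (0:ℝ) (2*r), AnalyticAt ℂ f (x:ℂ) := fun x hx => hball (hdist x hx)
    have hcont : ContinuousOn (fun x : ℝ => ‖f (x:ℂ)‖) (Set.Icc 0 (2*r)) := fun x hx =>
      (((han x hx).continuousAt.comp Complex.continuous_ofReal.continuousAt).norm).continuousWithinAt
    have bdd2 : BddAbove ((fun x : ℝ => ‖f (x:ℂ)‖) '' Set.Icc 0 (2*r)) :=
      (isCompact_Icc.image_of_continuousOn hcont).bddAbove
    have hsub : Set.Icc (0:ℝ) r ⊆ Set.Icc 0 (2*r) := Set.Icc_subset_Icc le_rfl (by linarith)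
    have bdd1 : BddAbove ((fun x : ℝ => ‖f (x:ℂ)‖) '' Set.Icc 0 r) :=
      bdd2.mono (Set.image_mono hsub)
    have ne1 : ((fun x : ℝ => ‖f (x:ℂ)‖) '' Set.Icc 0 r).Nonempty :=
      ⟨_, Set.mem_image_of_mem _ (Set.left_mem_Icc.mpr hr.le)⟩
    have hS12 : sSup ((fun x : ℝ => ‖f (x:ℂ)‖) '' Set.Icc 0 r) ≤
        sSup ((fun x : ℝ => ‖f (x:ℂ)‖) '' Set.Icc 0 (2*r)) :=
      csSup_le_csSup bdd2 ne1 (Set.image_mono hsub)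
    have hS1nn : (0:ℝ) ≤ sSup ((fun x : ℝ => ‖f (x:ℂ)‖) '' Set.Icc 0 r) :=
      le_trans (norm_nonneg _) (le_csSup bdd1 (Set.mem_image_of_mem _ (Set.left_mem_Icc.mpr hr.le)))
    refine ⟨r, hr, f, hfW, hfne, han, ?_⟩
    rw [hm'0]
    nlinarith
  · -- main case m ≥ 1
    have hset : {n : ℕ | iteratedDeriv n f 0 ≠ 0}.Nonempty := by
      by_contra h
      rw [Set.not_nonempty_iff_eq_empty] at h
      rw [h, Nat.sInf_empty] at hford
      exact hm'1 hford.symm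
    have hpord : p.order = m := by
      rw [FormalMultilinearSeries.order, ← deriv_set_eq hp, hford]
    have hDm : iteratedDeriv m f 0 ≠ 0 := hford ▸ Nat.sInf_mem hset
    have ppm : p m ≠ 0 := (Set.ext_iff.mp (deriv_set_eq hp) m).mp hDm
    have pne : p ≠ 0 := FormalMultilinearSeries.ne_iff.mpr ⟨m, ppm⟩
    set g := (Function.swap dslope (0:ℂ))^[m] f with hgdef
    have hg_an : AnalyticAt ℂ g 0 := ⟨_, hp.has_fpower_series_iterate_dslope_fslope m⟩
    have hg0 : g 0 ≠ 0 := by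
      have := hp.iterate_dslope_fslope_ne_zero pne
      rwa [hpord] at this
    have heq : ∀ᶠ z in nhds (0:ℂ), f z = z ^ m • g z := by
      have := hp.eq_pow_order_mul_iterate_dslope
      rw [hpord] at this
      exact Filter.Eventually.of_forall (fun z => by simpa using this z)
    set c := ‖g 0‖ with hc
    have hcpos : 0 < c := norm_pos_iff.mpr hg0
    set δ := ε / (2 * 2 ^ m) with hδ
    have h2m : (0:ℝ) < 2 ^ m := by positivity
    have hδpos : 0 < δ := by positivity
    have hnear : ∀ᶠ z in nhds (0:ℂ), g z ∈ Metric.ball (g 0) (δ * c) :=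
      hg_an.continuousAt (Metric.ball_mem_nhds _ (by positivity))
    obtain ⟨ρ, hρ, hball⟩ := Metric.eventually_nhds_iff.mp
      ((AnalyticAt.eventually_analyticAt ⟨p, hp⟩).and (heq.and hnear))
    set r := ρ / 4 with hrdef
    have hr : 0 < r := by positivity
    have hdist : ∀ x : ℝ, x ∈ Set.Icc (0:ℝ) (2*r) → dist (x:ℂ) 0 < ρ := by
      intro x hx
      rw [dist_zero_right, Complex.norm_real, Real.norm_eq_abs, abs_of_nonneg hx.1]
      have := hx.2; rw [hrdef] at this; linarith
    have hP : ∀ x : ℝ, x ∈ Set.Icc (0:ℝ) (2*r) →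
        AnalyticAt ℂ f (x:ℂ) ∧ (f (x:ℂ) = (x:ℂ)^m • g (x:ℂ) ∧
          g (x:ℂ) ∈ Metric.ball (g 0) (δ*c)) :=
      fun x hx => hball (hdist x hx)
    have han : ∀ x ∈ Set.Icc (0:ℝ) (2*r), AnalyticAt ℂ f (x:ℂ) := fun x hx => (hP x hx).1
    have hnorm : ∀ x : ℝ, x ∈ Set.Icc (0:ℝ) (2*r) → ‖f (x:ℂ)‖ = x ^ m * ‖g (x:ℂ)‖ := by
      intro x hx
      rw [(hP x hx).2.1, smul_eq_mul, norm_mul, norm_pow, Complex.norm_real,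
        Real.norm_eq_abs, abs_of_nonneg hx.1]
    have hgub : ∀ x : ℝ, x ∈ Set.Icc (0:ℝ) (2*r) → ‖g (x:ℂ)‖ ≤ (1 + δ) * c := by
      intro x hx
      have h1 := (hP x hx).2.2
      rw [Metric.mem_ball, dist_eq_norm] at h1
      have h2 := norm_sub_norm_le (g (x:ℂ)) (g 0)
      rw [← hc] at h2
      nlinarith
    have hglb : ∀ x : ℝ, x ∈ Set.Icc (0:ℝ) (2*r) → (1 - δ) * c ≤ ‖g (x:ℂ)‖ := by
      intro x hx
      have h1 := (hP x hx).2.2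
      rw [Metric.mem_ball, dist_eq_norm] at h1
      have h2 := norm_sub_norm_le (g 0) (g (x:ℂ))
      rw [norm_sub_rev, ← hc] at h2
      nlinarith
    have hcont : ContinuousOn (fun x : ℝ => ‖f (x:ℂ)‖) (Set.Icc 0 (2*r)) := fun x hx =>
      (((han x hx).continuousAt.comp Complex.continuous_ofReal.continuousAt).norm).continuousWithinAt
    have bdd2 : BddAbove ((fun x : ℝ => ‖f (x:ℂ)‖) '' Set.Icc 0 (2*r)) :=
      (isCompact_Icc.image_of_continuousOn hcont).bddAbove
    have hsub : Set.Icc (0:ℝ) r ⊆ Set.Icc 0 (2*r) := Set.Icc_subset_Icc le_rfl (by linarith)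
    have bdd1 : BddAbove ((fun x : ℝ => ‖f (x:ℂ)‖) '' Set.Icc 0 r) :=
      bdd2.mono (Set.image_mono hsub)
    have ne1 : ((fun x : ℝ => ‖f (x:ℂ)‖) '' Set.Icc 0 r).Nonempty :=
      ⟨_, Set.mem_image_of_mem _ (Set.left_mem_Icc.mpr hr.le)⟩
    have hS1le : sSup ((fun x : ℝ => ‖f (x:ℂ)‖) '' Set.Icc 0 r) ≤ r ^ m * ((1 + δ) * c) := by
      apply csSup_le ne1
      rintro _ ⟨x, hx, rfl⟩
      show ‖f (x:ℂ)‖ ≤ r ^ m * ((1 + δ) * c)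
      rw [hnorm x (hsub hx)]
      have h1 : x ^ m ≤ r ^ m := pow_le_pow_left₀ hx.1 hx.2 m
      exact mul_le_mul h1 (hgub x (hsub hx)) (norm_nonneg _) (by positivity)
    have h2rmem : (2*r) ∈ Set.Icc (0:ℝ) (2*r) := Set.right_mem_Icc.mpr (by linarith)
    have hflow : (2*r) ^ m * ((1 - δ) * c) ≤ ‖f (((2*r : ℝ)):ℂ)‖ := by
      rw [hnorm _ h2rmem]
      exact mul_le_mul_of_nonneg_left (hglb _ h2rmem) (by positivity)
    have hS2ge : ‖f (((2*r : ℝ)):ℂ)‖ ≤ sSup ((fun x : ℝ => ‖f (x:ℂ)‖) '' Set.Icc 0 (2*r)) :=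
      le_csSup bdd2 (Set.mem_image_of_mem _ h2rmem)
    refine ⟨r, hr, f, hfW, hfne, han, ?_⟩
    rcases le_or_gt ((2:ℝ)^m - ε) 0 with hneg | hpos2
    · have hS1nn : (0:ℝ) ≤ sSup ((fun x : ℝ => ‖f (x:ℂ)‖) '' Set.Icc 0 r) :=
        le_trans (norm_nonneg _) (le_csSup bdd1 (Set.mem_image_of_mem _ (Set.left_mem_Icc.mpr hr.le)))
      have hS2nn : (0:ℝ) ≤ sSup ((fun x : ℝ => ‖f (x:ℂ)‖) '' Set.Icc 0 (2*r)) :=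
        le_trans (norm_nonneg _) hS2ge
      nlinarith
    · have hδe : δ * (2 * 2 ^ m) = ε := by
        rw [hδ]; field_simp
      have key : ((2:ℝ)^m - ε) * (1 + δ) ≤ 2 ^ m * (1 - δ) := by nlinarith
      have key2 : ((2:ℝ)^m - ε) * (r ^ m * ((1 + δ) * c)) ≤ (2*r) ^ m * ((1 - δ) * c) := by
        rw [mul_pow]
        have h3 : (0:ℝ) ≤ r ^ m * c := by positivity
        nlinarith [mul_le_mul_of_nonneg_left key h3]
      calc ((2:ℝ)^m - ε) * sSup ((fun x : ℝ => ‖f (x:ℂ)‖) '' Set.Icc 0 r)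
          ≤ ((2:ℝ)^m - ε) * (r ^ m * ((1 + δ) * c)) :=
            mul_le_mul_of_nonneg_left hS1le hpos2.le
        _ ≤ (2*r) ^ m * ((1 - δ) * c) := key2
        _ ≤ ‖f (((2*r : ℝ)):ℂ)‖ := hflow
        _ ≤ _ := hS2ge
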